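/- Let F be a field of prime characteristic p, and let R: h(n) → gl(V) be a faithful finite-dimensional irreducible representation over an algebraically closed field F. Then dim V = p^n. -/

import Mathlib

/-- `X`, `Y`, `z` form a symplectic basis of a Heisenberg Lie algebra `L` of
dimension `2n+1` over `F`: they are a basis of `L`, with brackets
`⁅X i, Y i⁆ = z` and all other brackets of basis vectors zero. -/
structure IsHeisenbergBasis (F : Type*) [Field F] {n : ℕ} {L : Type*}
    [LieRing L] [LieAlgebra F L] (X Y : Fin n → L) (z : L) : Prop where
  indep : LinearIndependent F (Sum.elim X (Sum.elim Y fun _ : Unit => z))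
  span : Submodule.span F (Set.range (Sum.elim X (Sum.elim Y fun _ : Unit => z))) = ⊤
  lie_xy : ∀ i j, ⁅X i, Y j⁆ = if i = j then z else 0
  lie_xx : ∀ i j, ⁅X i, X j⁆ = 0
  lie_yy : ∀ i j, ⁅Y i, Y j⁆ = 0
  lie_xz : ∀ i, ⁅X i, z⁆ = 0
  lie_yz : ∀ i, ⁅Y i, z⁆ = 0

section HeisAux

variable {E : Type*} [Ring E]

/-- Weyl-type commutation: if `a * b - b * a = c` with `c` commuting with `b`,
then `a * b^(m+1) = b^(m+1) * a + (m+1) • (c * b^m)`. -/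
lemma heis_weyl_pow (a b c : E) (hc : Commute c b) (h : a * b - b * a = c) :
    ∀ m : ℕ, a * b ^ (m + 1) = b ^ (m + 1) * a + (m + 1) • (c * b ^ m) := by
  have hab : a * b = b * a + c := by rw [← h]; abel
  intro m
  induction m with
  | zero => simp [hab]
  | succ m ih =>
    calc a * b ^ (m + 2) = (a * b ^ (m + 1)) * b := by
          rw [mul_assoc, ← pow_succ]
      _ = (b ^ (m + 1) * a + (m + 1) • (c * b ^ m)) * b := by rw [ih]
      _ = b ^ (m + 1) * (a * b) + (m + 1) • (c * b ^ (m + 1)) := by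
          rw [add_mul, mul_assoc, smul_mul_assoc, mul_assoc, ← pow_succ]
      _ = b ^ (m + 1) * (b * a) + b ^ (m + 1) * c + (m + 1) • (c * b ^ (m + 1)) := by
          rw [hab, mul_add]
      _ = b ^ (m + 2) * a + (m + 2) • (c * b ^ (m + 1)) := by
          rw [← mul_assoc, ← pow_succ, (hc.pow_right (m+1)).eq]
          have h2 : (m + 2) • (b ^ (m+1) * c) = (m+1) • (b ^ (m+1) * c) + b ^ (m+1) * c :=
            succ_nsmul _ (m+1)
          rw [h2, add_assoc, add_comm (b ^ (m+1) * c)]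

/-- In characteristic `p`, if `a * b - b * a = c` with `c` commuting with `b`,
then `b ^ p` commutes with `a`. -/
lemma heis_weyl_pow_comm (p : ℕ) [hp : Fact p.Prime] [CharP E p] (a b c : E)
    (hc : Commute c b) (h : a * b - b * a = c) : Commute (b ^ p) a := by
  obtain ⟨m, hm⟩ : ∃ m, p = m + 1 := ⟨p - 1, (Nat.succ_pred_eq_of_pos hp.out.pos).symm⟩
  have hw := heis_weyl_pow a b c hc h m
  have hz : ((m + 1 : ℕ) : E) = 0 := by rw [← hm]; exact CharP.cast_eq_zero E p
  have : (m + 1) • (c * b ^ m) = 0 := by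
    rw [nsmul_eq_mul, Nat.cast_add, Nat.cast_one]
    rw [show ((m : E) + 1) = ((m + 1 : ℕ) : E) by push_cast; ring, hz, zero_mul]
  rw [this, add_zero] at hw
  rw [hm]
  exact hw.symm

/-- A commuting family of nilpotent endomorphisms on a nontrivial space has a
common nonzero kernel vector. -/
lemma heis_common_kernel {F V : Type*} [Field F] [AddCommGroup V] [Module F V]
    {n : ℕ} (f : Fin n → Module.End F V) (p : ℕ) (hp : 0 < p)
    (hcomm : ∀ i j, Commute (f i) (f j))
    (hnil : ∀ i, f i ^ p = 0) (v0 : V) (hv0 : v0 ≠ 0) :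
    ∃ v : V, v ≠ 0 ∧ ∀ i, f i v = 0 := by
  classical
  suffices h : ∀ s : Finset (Fin n), ∃ v : V, v ≠ 0 ∧ ∀ i ∈ s, f i v = 0 by
    obtain ⟨v, hv, h⟩ := h Finset.univ
    exact ⟨v, hv, fun i => h i (Finset.mem_univ i)⟩
  intro s
  induction s using Finset.induction_on with
  | empty => exact ⟨v0, hv0, by simp⟩
  | insert _ _ ha ih =>
    rename_i a s
    obtain ⟨v, hv, hs⟩ := ih
    have hP : ∃ k, ((f a) ^ k) v = 0 := ⟨p, by rw [hnil]; rfl⟩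
    have hm0 : Nat.find hP ≠ 0 := by
      intro h0
      have hsp := Nat.find_spec hP
      rw [h0] at hsp
      simp at hsp
      exact hv hsp
    obtain ⟨m', hm'⟩ : ∃ m', Nat.find hP = m' + 1 :=
      ⟨Nat.find hP - 1, (Nat.succ_pred_eq_of_pos (Nat.pos_of_ne_zero hm0)).symm⟩
    refine ⟨((f a) ^ m') v, ?_, ?_⟩
    · exact Nat.find_min hP (by omega)
    · intro i hi
      rcases Finset.mem_insert.mp hi with rfl | hi
      · have hsp := Nat.find_spec hP
        rw [hm'] at hsp
        calc f i (((f i) ^ m') v) = ((f i) ^ (m' + 1)) v := by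
              rw [pow_succ']; rfl
          _ = 0 := hsp
      · have hc : f i * (f a) ^ m' = (f a) ^ m' * f i := ((hcomm i a).pow_right m').eq
        calc f i (((f a) ^ m') v) = (f i * (f a) ^ m') v := rfl
          _ = ((f a) ^ m' * f i) v := by rw [hc]
          _ = ((f a) ^ m') (f i v) := rfl
          _ = 0 := by rw [hs i hi, map_zero]

section ProdAux

variable {n : ℕ} {E : Type*} [Monoid E] (B : Fin n → E) (hBB : ∀ i j, Commute (B i) (B j))

/-- The ordered product `∏ i, B i ^ k i` for a commuting family. -/
noncomputable def heisProd (k : Fin n → ℕ) : E :=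
  Finset.univ.noncommProd (fun i => B i ^ k i)
    (show Set.Pairwise _ _ from fun i _ j _ _ => (hBB i j).pow_pow _ _)

lemma heisProd_split (k : Fin n → ℕ) (i : Fin n) :
    heisProd B hBB k = B i ^ k i * heisProd B hBB (Function.update k i 0) := by
  classical
  rw [heisProd, heisProd]
  rw [← Finset.mul_noncommProd_erase Finset.univ (Finset.mem_univ i) (fun j => B j ^ k j) _,
      ← Finset.mul_noncommProd_erase Finset.univ (Finset.mem_univ i)
        (fun j => B j ^ (Function.update k i 0) j) _]
  have h0 : (Function.update k i 0) i = 0 := Function.update_self i 0 k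
  rw [h0, pow_zero, one_mul]
  congr 1
  refine Finset.noncommProd_congr rfl (fun j hj => ?_) _
  rw [Function.update_of_ne (Finset.ne_of_mem_erase hj)]

lemma heisProd_commute (x : E) (k : Fin n → ℕ)
    (hx : ∀ i, k i ≠ 0 → Commute x (B i)) :
    Commute x (heisProd B hBB k) := by
  refine Finset.noncommProd_commute _ _ _ _ (fun i _ => ?_)
  rcases Nat.eq_zero_or_pos (k i) with h | h
  · rw [h, pow_zero]; exact Commute.one_right x
  · exact (hx i (by omega)).pow_right _

end ProdAux

section Action

variable {F V : Type*} [Field F] [AddCommGroup V] [Module F V] {n : ℕ}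
  (B A' : Fin n → Module.End F V)
  (hBB : ∀ i j, Commute (B i) (B j))
  (v : V)

/-- The vector `(∏ i, B i ^ k i) v`. -/
noncomputable def heisW (k : Fin n → ℕ) : V := heisProd B hBB k v

lemma heisW_zero : heisW B hBB v (fun _ => 0) = v := by
  have h1 : heisProd B hBB (fun _ => 0) = 1 := by
    rw [heisProd]
    rw [Finset.noncommProd_eq_pow_card _ _ _ 1 (fun x _ => pow_zero _)]
    exact one_pow _
  rw [heisW, h1]
  rfl

lemma heisW_B (k : Fin n → ℕ) (i : Fin n) :
    B i (heisW B hBB v k) = heisW B hBB v (Function.update k i (k i + 1)) := by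
  classical
  have h1 : heisProd B hBB (Function.update k i (k i + 1))
      = B i ^ (k i + 1) * heisProd B hBB (Function.update k i 0) := by
    have h := heisProd_split B hBB (Function.update k i (k i + 1)) i
    simpa [Function.update_idem] using h
  calc B i (heisW B hBB v k) = (B i * heisProd B hBB k) v := rfl
    _ = (B i * (B i ^ k i * heisProd B hBB (Function.update k i 0))) v := by
        rw [← heisProd_split]
    _ = (B i ^ (k i + 1) * heisProd B hBB (Function.update k i 0)) v := by
        rw [← mul_assoc, ← pow_succ']
    _ = heisW B hBB v (Function.update k i (k i + 1)) := by rw [heisW, h1]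

lemma heisW_reduce (k : Fin n → ℕ) (i : Fin n) (p t : ℕ) (γ : F)
    (hBp : B i ^ p = γ • 1) :
    heisW B hBB v (Function.update k i (t + p)) = γ • heisW B hBB v (Function.update k i t) := by
  classical
  have h1 : heisProd B hBB (Function.update k i (t + p))
      = B i ^ (t + p) * heisProd B hBB (Function.update k i 0) := by
    simpa [Function.update_idem] using heisProd_split B hBB (Function.update k i (t + p)) i
  have h2 : heisProd B hBB (Function.update k i t)
      = B i ^ t * heisProd B hBB (Function.update k i 0) := by
    simpa [Function.update_idem] using heisProd_split B hBB (Function.update k i t) i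
  rw [heisW, heisW, h1, h2, pow_add, hBp]
  rw [mul_assoc, smul_mul_assoc, one_mul, mul_smul_comm]
  rfl

variable {i : Fin n}

lemma heisW_A' (hA'B : ∀ j, j ≠ i → Commute (A' i) (B j))
    (hABi : A' i * B i - B i * A' i = 1) (hv : A' i v = 0) (k : Fin n → ℕ) :
    A' i (heisW B hBB v k) = ((k i : ℕ) : F) • heisW B hBB v (Function.update k i (k i - 1)) := by
  classical
  have hcomm0 : Commute (A' i) (heisProd B hBB (Function.update k i 0)) := by
    apply heisProd_commute
    intro j hj
    have hji : j ≠ i := by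
      intro h; subst h; simp [Function.update_self] at hj
    exact hA'B j hji
  have hsplit2 : heisProd B hBB (Function.update k i (k i - 1))
      = B i ^ (k i - 1) * heisProd B hBB (Function.update k i 0) := by
    simpa [Function.update_idem] using heisProd_split B hBB (Function.update k i (k i - 1)) i
  rcases Nat.eq_zero_or_pos (k i) with h0 | hpos
  · have hkk : Function.update k i 0 = k := by
      rw [← h0]; exact Function.update_eq_self i k
    rw [h0]
    simp only [Nat.cast_zero, zero_smul]
    calc A' i (heisW B hBB v k) = (A' i * heisProd B hBB k) v := rfl
      _ = (heisProd B hBB k * A' i) v := by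
          have hc2 : Commute (A' i) (heisProd B hBB k) := by rw [← hkk]; exact hcomm0
          rw [hc2.eq]
      _ = heisProd B hBB k (A' i v) := rfl
      _ = 0 := by rw [hv, map_zero]
  · obtain ⟨m, hm⟩ : ∃ m, k i = m + 1 := ⟨k i - 1, by omega⟩
    have hw1 := heis_weyl_pow (A' i) (B i) 1 (Commute.one_left _) hABi m
    have key : A' i * heisProd B hBB k
        = heisProd B hBB k * A' i
          + (m + 1) • (B i ^ m * heisProd B hBB (Function.update k i 0)) := by
      calc A' i * heisProd B hBB k
          = A' i * (B i ^ (m + 1) * heisProd B hBB (Function.update k i 0)) := by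
            rw [← hm, ← heisProd_split]
        _ = (A' i * B i ^ (m + 1)) * heisProd B hBB (Function.update k i 0) := by
            rw [mul_assoc]
        _ = (B i ^ (m + 1) * A' i + (m + 1) • (1 * B i ^ m))
              * heisProd B hBB (Function.update k i 0) := by rw [hw1]
        _ = B i ^ (m + 1) * (A' i * heisProd B hBB (Function.update k i 0))
              + (m + 1) • (B i ^ m * heisProd B hBB (Function.update k i 0)) := by
            rw [add_mul, smul_mul_assoc, one_mul, mul_assoc]
        _ = B i ^ (m + 1) * (heisProd B hBB (Function.update k i 0) * A' i)
              + (m + 1) • (B i ^ m * heisProd B hBB (Function.update k i 0)) := by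
            rw [hcomm0.eq]
        _ = heisProd B hBB k * A' i
              + (m + 1) • (B i ^ m * heisProd B hBB (Function.update k i 0)) := by
            rw [← mul_assoc]
            conv_rhs => rw [heisProd_split B hBB k i, hm]
    have happ : A' i (heisW B hBB v k)
        = (heisProd B hBB k * A' i) v
          + ((m + 1) • (B i ^ m * heisProd B hBB (Function.update k i 0))) v := by
      calc A' i (heisW B hBB v k) = (A' i * heisProd B hBB k) v := rfl
        _ = _ := by rw [key]; rfl
    rw [happ]
    have h1 : (heisProd B hBB k * A' i) v = 0 := by
      calc (heisProd B hBB k * A' i) v = heisProd B hBB k (A' i v) := rfl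
        _ = 0 := by rw [hv, map_zero]
    have h2 : ((m + 1) • (B i ^ m * heisProd B hBB (Function.update k i 0))) v
        = ((k i : ℕ) : F) • heisW B hBB v (Function.update k i (k i - 1)) := by
      have hm1 : k i - 1 = m := by omega
      rw [heisW, hsplit2, hm1]
      rw [← Nat.cast_smul_eq_nsmul F (m + 1)]
      rw [LinearMap.smul_apply]
      rw [hm]
    rw [h1, h2, zero_add]

lemma heisW_A'_pow (hA'B : ∀ j, j ≠ i → Commute (A' i) (B j))
    (hABi : A' i * B i - B i * A' i = 1) (hv : A' i v = 0) :
    ∀ (t : ℕ) (k : Fin n → ℕ), (A' i ^ t) (heisW B hBB v k)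
      = (((k i).descFactorial t : ℕ) : F) • heisW B hBB v (Function.update k i (k i - t)) := by
  intro t
  induction t with
  | zero =>
    intro k
    simp [Function.update_eq_self]
  | succ t ih =>
    intro k
    rw [pow_succ']
    have : (A' i * A' i ^ t) (heisW B hBB v k) = A' i ((A' i ^ t) (heisW B hBB v k)) := rfl
    rw [this, ih, map_smul, heisW_A' B A' hBB v hA'B hABi hv]
    rw [Function.update_idem, smul_smul]
    congr 1
    · rw [Function.update_self]
      rw [Nat.descFactorial_succ]
      push_cast
      ring
    · rw [Function.update_self, Nat.sub_sub]

lemma heisW_Q (hA'A' : ∀ i j, Commute (A' i) (A' j))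
    (hA'B : ∀ i j, j ≠ i → Commute (A' i) (B j))
    (hABi : ∀ i, A' i * B i - B i * A' i = 1) (hv : ∀ i, A' i v = 0)
    (s : Finset (Fin n)) (m k : Fin n → ℕ) :
    (s.noncommProd (fun i => A' i ^ m i) (show Set.Pairwise _ _ from fun i _ j _ _ => (hA'A' i j).pow_pow _ _))
        (heisW B hBB v k)
      = (((∏ i ∈ s, (k i).descFactorial (m i) : ℕ)) : F)
          • heisW B hBB v (fun j => if j ∈ s then k j - m j else k j) := by
  classical
  induction s using Finset.induction_on generalizing k with
  | empty => simp
  | insert _ _ ha ih =>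
    rename_i a s
    rw [Finset.noncommProd_insert_of_notMem _ _ _ _ ha]
    have happ : ((A' a ^ m a) * s.noncommProd (fun i => A' i ^ m i)
        (show Set.Pairwise _ _ from fun i _ j _ _ => (hA'A' i j).pow_pow _ _)) (heisW B hBB v k)
        = (A' a ^ m a) ((s.noncommProd (fun i => A' i ^ m i)
            (show Set.Pairwise _ _ from fun i _ j _ _ => (hA'A' i j).pow_pow _ _)) (heisW B hBB v k)) := rfl
    rw [happ, ih, map_smul, heisW_A'_pow B A' hBB v (hA'B a) (hABi a) (hv a)]
    rw [if_neg ha, smul_smul, ← Nat.cast_mul, Finset.prod_insert ha]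
    congr 1
    · push_cast; ring
    · congr 1
      funext j
      rw [Function.update_apply]
      by_cases hj : j = a
      · subst hj; simp
      · simp only [hj, if_false, Finset.mem_insert]
        by_cases hjs : j ∈ s <;> simp [hjs, hj]

end Action

end HeisAux

attribute [local instance] LieRing.ofAssociativeRing

theorem heisenberg_faithful_irreducible_dim_eq_pow
    (F : Type*) [Field F] [IsAlgClosed F] (p : ℕ) [Fact p.Prime] [CharP F p]
    {n : ℕ} {L : Type*} [LieRing L] [LieAlgebra F L]
    (X Y : Fin n → L) (z : L) (hH : IsHeisenbergBasis F X Y z)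
    (V : Type*) [AddCommGroup V] [Module F V] [FiniteDimensional F V]
    (R : L →ₗ⁅F⁆ Module.End F V)
    (hinj : Function.Injective R)
    (hirr : ∀ U : Submodule F V, (∀ a : L, ∀ v ∈ U, R a v ∈ U) → U = ⊥ ∨ U = ⊤) :
    Module.finrank F V = p ^ n := by
  classical
  have hp : p.Prime := Fact.out
  -- z is nonzero
  have hz0 : z ≠ 0 := hH.indep.ne_zero (Sum.inr (Sum.inr ()))
  -- V is nontrivial
  have hVnt : Nontrivial V := by
    by_contra h
    rw [not_nontrivial_iff_subsingleton] at h
    exact hz0 (hinj (Subsingleton.elim _ _))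
  -- induction principle over generators
  have hgen : ∀ (P : Module.End F V → Prop),
      P 0 → (∀ T S, P T → P S → P (T + S)) → (∀ (μ : F) T, P T → P (μ • T)) →
      (∀ i, P (R (X i))) → (∀ i, P (R (Y i))) → P (R z) → ∀ a : L, P (R a) := by
    intro P h0 hadd hsmul hX hY hz a
    have ha : a ∈ Submodule.span F (Set.range (Sum.elim X (Sum.elim Y fun _ : Unit => z))) := by
      rw [hH.span]; trivial
    induction ha using Submodule.span_induction with
    | mem x hx =>
      obtain ⟨t, rfl⟩ := hx
      rcases t with i | t
      · exact hX i
      · rcases t with i | t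
        · exact hY i
        · exact hz
    | zero => rw [map_zero R]; exact h0
    | add x y hx hy ihx ihy => rw [map_add R]; exact hadd _ _ ihx ihy
    | smul μ x hx ih => rw [map_smul R]; exact hsmul _ _ ih
  -- commuting images from vanishing brackets
  have hcl : ∀ a b : L, ⁅a, b⁆ = 0 → Commute (R a) (R b) := by
    intro a b hab
    have h1 : ⁅R a, R b⁆ = 0 := by rw [← R.map_lie, hab, map_zero R]
    rw [Ring.lie_def] at h1
    exact sub_eq_zero.mp h1
  -- z is central
  have hzc : ∀ a : L, Commute (R a) (R z) :=
    hgen (fun T => Commute T (R z)) (Commute.zero_left _)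
      (fun T S h1 h2 => h1.add_left h2) (fun μ T h => h.smul_left μ)
      (fun i => hcl _ _ (hH.lie_xz i)) (fun i => hcl _ _ (hH.lie_yz i)) (Commute.refl _)
  -- Schur's lemma
  have schur : ∀ T : Module.End F V, (∀ a : L, Commute (R a) T) → ∃ μ : F, T = μ • 1 := by
    intro T hT
    obtain ⟨μ, hμ⟩ := Module.End.exists_eigenvalue T
    refine ⟨μ, ?_⟩
    have hUinv : ∀ a : L, ∀ x ∈ Module.End.eigenspace T μ, R a x ∈ Module.End.eigenspace T μ := by
      intro a x hx
      rw [Module.End.mem_eigenspace_iff] at hx ⊢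
      calc T (R a x) = (T * R a) x := rfl
        _ = (R a * T) x := by rw [(hT a).eq]
        _ = R a (T x) := rfl
        _ = μ • R a x := by rw [hx, map_smul]
    rcases hirr _ hUinv with h | h
    · exact absurd h hμ
    · ext x
      have hx : x ∈ Module.End.eigenspace T μ := h ▸ Submodule.mem_top
      rw [Module.End.mem_eigenspace_iff] at hx
      simpa using hx
  -- R z is a nonzero scalar c
  obtain ⟨c, hc⟩ := schur (R z) hzc
  have hc0 : c ≠ 0 := by
    intro h
    apply hz0
    apply hinj
    rw [hc, h, map_zero R, zero_smul]
  set A : Fin n → Module.End F V := fun i => R (X i) with hAdef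
  set B : Fin n → Module.End F V := fun i => c⁻¹ • R (Y i) with hBdef
  have hRY : ∀ i, R (Y i) = c • B i := by
    intro i; rw [hBdef]; simp [smul_smul, mul_inv_cancel₀ hc0]
  have hAB : ∀ i j, A i * B j - B j * A i = if i = j then 1 else 0 := by
    intro i j
    have h1 : R (X i) * R (Y j) - R (Y j) * R (X i) = if i = j then c • 1 else 0 := by
      rw [← Ring.lie_def, ← R.map_lie, hH.lie_xy]
      split
      · exact hc
      · rw [map_zero R]
    calc A i * B j - B j * A i
        = c⁻¹ • (R (X i) * R (Y j) - R (Y j) * R (X i)) := by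
          rw [hAdef, hBdef]
          simp only [mul_smul_comm, smul_mul_assoc, smul_sub]
      _ = c⁻¹ • (if i = j then c • (1 : Module.End F V) else 0) := by rw [h1]
      _ = if i = j then 1 else 0 := by
          split <;> simp [smul_smul, inv_mul_cancel₀ hc0]
  have hAA : ∀ i j, Commute (A i) (A j) := fun i j => hcl _ _ (hH.lie_xx i j)
  have hBB : ∀ i j, Commute (B i) (B j) := by
    intro i j
    exact ((hcl _ _ (hH.lie_yy i j)).smul_left c⁻¹).smul_right c⁻¹
  have hABne : ∀ i j, i ≠ j → Commute (A i) (B j) := by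
    intro i j hij
    have h := hAB i j
    rw [if_neg hij] at h
    exact sub_eq_zero.mp h
  -- characteristic p on endomorphisms
  haveI hEchar : CharP (Module.End F V) p := by
    refine charP_of_injective_algebraMap (R := F) ?_ p
    intro x y hxy
    obtain ⟨v1, hv1⟩ := exists_ne (0 : V)
    have h2 : x • v1 = y • v1 := by
      have := LinearMap.congr_fun hxy v1
      simpa [Module.algebraMap_end_apply] using this
    have h3 : (x - y) • v1 = 0 := by rw [sub_smul, h2, sub_self]
    rcases smul_eq_zero.mp h3 with h | h
    · exact sub_eq_zero.mp h
    · exact absurd h hv1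
  -- A i ^ p is central
  have hApc : ∀ i, ∀ a : L, Commute (R a) (A i ^ p) := by
    intro i
    refine hgen (fun T => Commute T (A i ^ p)) (Commute.zero_left _)
      (fun T S h1 h2 => h1.add_left h2) (fun μ T h => h.smul_left μ)
      (fun j => (hAA j i).pow_right p) (fun j => ?_) ?_
    · rw [hRY j]
      refine Commute.smul_left ?_ c
      by_cases hij : i = j
      · subst hij
        have hcomm : B i * A i - A i * B i = -1 := by
          have h := hAB i i
          rw [if_pos rfl] at h
          rw [← neg_sub, h]
        exact (heis_weyl_pow_comm p (B i) (A i) (-1)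
          ((Commute.one_left (A i)).neg_left) hcomm).symm
      · exact ((hABne i j (fun h => hij h)).symm).pow_right p
    · rw [hc]
      exact ((Commute.one_left _).smul_left c)
  have hBpc : ∀ i, ∀ a : L, Commute (R a) (B i ^ p) := by
    intro i
    refine hgen (fun T => Commute T (B i ^ p)) (Commute.zero_left _)
      (fun T S h1 h2 => h1.add_left h2) (fun μ T h => h.smul_left μ)
      (fun j => ?_) (fun j => ?_) ?_
    · by_cases hij : j = i
      · subst hij
        have hcomm : A j * B j - B j * A j = 1 := by
          have h := hAB j j; rwa [if_pos rfl] at h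
        exact (heis_weyl_pow_comm p (A j) (B j) 1
          (Commute.one_left (B j)) hcomm).symm
      · exact (hABne j i hij).pow_right p
    · rw [hRY j]
      exact Commute.smul_left ((hBB j i).pow_right p) c
    · rw [hc]
      exact ((Commute.one_left _).smul_left c)
  obtain ⟨α, hα⟩ : ∃ α : Fin n → F, ∀ i, A i ^ p = α i • 1 := by
    choose α hα using fun i => schur (A i ^ p) (hApc i)
    exact ⟨α, hα⟩
  obtain ⟨γ, hγ⟩ : ∃ γ : Fin n → F, ∀ i, B i ^ p = γ i • 1 := by
    choose γ hγ using fun i => schur (B i ^ p) (hBpc i)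
    exact ⟨γ, hγ⟩
  obtain ⟨β, hβ⟩ : ∃ β : Fin n → F, ∀ i, β i ^ p = α i := by
    choose β hβ using fun i => IsAlgClosed.exists_pow_nat_eq (α i) hp.pos
    exact ⟨β, hβ⟩
  set A' : Fin n → Module.End F V := fun i => A i - β i • 1 with hA'def
  have hA'p : ∀ i, A' i ^ p = 0 := by
    intro i
    show (A i - β i • 1) ^ p = 0
    rw [sub_pow_char_of_commute p ((Commute.one_right (A i)).smul_right (β i))]
    rw [hα i, smul_pow, one_pow, hβ i, sub_self]
  have hA'A' : ∀ i j, Commute (A' i) (A' j) := by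
    intro i j
    show Commute (A i - β i • 1) (A j - β j • 1)
    refine Commute.sub_left ?_ ?_
    · exact (hAA i j).sub_right ((Commute.one_right (A i)).smul_right (β j))
    · refine Commute.sub_right ?_ ?_
      · exact (Commute.one_left (A j)).smul_left (β i)
      · exact ((Commute.refl (1 : Module.End F V)).smul_left (β i)).smul_right (β j)
  have hA'B : ∀ i j, A' i * B j - B j * A' i = if i = j then 1 else 0 := by
    intro i j
    have hexp : A' i * B j - B j * A' i = A i * B j - B j * A i := by
      show (A i - β i • 1) * B j - B j * (A i - β i • 1) = _
      simp only [sub_mul, mul_sub, smul_mul_assoc, mul_smul_comm, one_mul, mul_one]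
      abel
    rw [hexp, hAB i j]
  have hA'Bne : ∀ i j, j ≠ i → Commute (A' i) (B j) := by
    intro i j hij
    have h := hA'B i j
    rw [if_neg (fun h' => hij h'.symm)] at h
    exact sub_eq_zero.mp h
  have hA'B1 : ∀ i, A' i * B i - B i * A' i = 1 := by
    intro i; have h := hA'B i i; rwa [if_pos rfl] at h
  -- common kernel vector
  obtain ⟨v1, hv1⟩ := exists_ne (0 : V)
  obtain ⟨v, hv, hker⟩ := heis_common_kernel A' p hp.pos hA'A' hA'p v1 hv1
  -- monomial vectors
  set w : (Fin n → ℕ) → V := fun k => heisW B hBB v k with hwdef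
  set u : (Fin n → Fin p) → V := fun k => w (fun i => (k i : ℕ)) with hudef
  set W : Submodule F V := Submodule.span F (Set.range u) with hWdef
  have hmem : ∀ k : Fin n → ℕ, (∀ i, k i < p) → w k ∈ W := by
    intro k hk
    exact Submodule.subset_span ⟨fun i => ⟨k i, hk i⟩, rfl⟩
  have hstep : ∀ T : Module.End F V, (∀ k : Fin n → Fin p, T (u k) ∈ W) → ∀ x ∈ W, T x ∈ W := by
    intro T hT x hx
    induction hx using Submodule.span_induction with
    | mem x hx => obtain ⟨k, rfl⟩ := hx; exact hT k
    | zero => rw [map_zero]; exact W.zero_mem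
    | add x y hx hy ihx ihy => rw [map_add]; exact W.add_mem ihx ihy
    | smul μ x hx ih => rw [map_smul]; exact W.smul_mem μ ih
  have hWB : ∀ i, ∀ x ∈ W, B i x ∈ W := by
    intro i
    apply hstep
    intro k
    have hBu : B i (u k) = w (Function.update (fun j => ((k j : ℕ))) i ((k i : ℕ) + 1)) :=
      heisW_B B hBB v _ i
    rw [hBu]
    by_cases hlt : (k i : ℕ) + 1 < p
    · apply hmem
      intro j
      rw [Function.update_apply]
      split
      · exact hlt
      · exact (k j).isLt
    · have hip : (k i : ℕ) + 1 = p := by have := (k i).isLt; omega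
      have hred := heisW_reduce B hBB v (fun j => ((k j : ℕ))) i p 0 (γ i) (hγ i)
      rw [Nat.zero_add] at hred
      rw [hip]
      have hred' : w (Function.update (fun j => ((k j : ℕ))) i p)
          = γ i • w (Function.update (fun j => ((k j : ℕ))) i 0) := hred
      rw [hred']
      apply W.smul_mem
      apply hmem
      intro j
      rw [Function.update_apply]
      split
      · exact hp.pos
      · exact (k j).isLt
  have hWA : ∀ i, ∀ x ∈ W, A i x ∈ W := by
    intro i
    apply hstep
    intro k
    have hAi : A i = A' i + β i • 1 := by
      show A i = (A i - β i • 1) + β i • 1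
      abel
    rw [hAi, LinearMap.add_apply, LinearMap.smul_apply, Module.End.one_apply]
    refine W.add_mem ?_ (W.smul_mem _ (Submodule.subset_span ⟨k, rfl⟩))
    have hAu : A' i (u k) = (((k i : ℕ) : ℕ) : F)
        • w (Function.update (fun j => ((k j : ℕ))) i ((k i : ℕ) - 1)) :=
      heisW_A' B A' hBB v (fun j hj => hA'Bne i j hj) (hA'B1 i) (hker i) _
    rw [hAu]
    apply W.smul_mem
    apply hmem
    intro j
    rw [Function.update_apply]
    split
    · have := (k i).isLt; omega
    · exact (k j).isLt
  have hWinv : ∀ a : L, ∀ x ∈ W, R a x ∈ W := by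
    intro a
    refine hgen (fun T => ∀ x ∈ W, T x ∈ W) ?_ ?_ ?_ ?_ ?_ ?_ a
    · intro x hx; rw [LinearMap.zero_apply]; exact W.zero_mem
    · intro T S hT hS x hx; rw [LinearMap.add_apply]; exact W.add_mem (hT x hx) (hS x hx)
    · intro μ T hT x hx; rw [LinearMap.smul_apply]; exact W.smul_mem μ (hT x hx)
    · intro i; exact hWA i
    · intro i x hx
      rw [hRY i, LinearMap.smul_apply]
      exact W.smul_mem c (hWB i x hx)
    · intro x hx
      rw [hc, LinearMap.smul_apply, Module.End.one_apply]
      exact W.smul_mem c hx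
  have hWtop : W = ⊤ := by
    rcases hirr W hWinv with h | h
    · exfalso
      have hvW : v ∈ W := by
        have h0 : w (fun _ => 0) = v := heisW_zero B hBB v
        have hm := hmem (fun _ => 0) (fun i => hp.pos)
        rwa [h0] at hm
      rw [h] at hvW
      exact hv ((Submodule.mem_bot F).mp hvW)
    · exact h
  -- linear independence of the monomials
  have hu_li : LinearIndependent F u := by
    rw [Fintype.linearIndependent_iff]
    intro g hg
    by_contra hgn
    push_neg at hgn
    obtain ⟨k0, hk0⟩ := hgn
    have hSne : (Finset.univ.filter (fun k : Fin n → Fin p => g k ≠ 0)).Nonempty :=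
      ⟨k0, by simp [hk0]⟩
    obtain ⟨mf, hmS, hmax'⟩ := Finset.exists_maximal hSne
    have hmax : ∀ k ∈ Finset.univ.filter (fun k : Fin n → Fin p => g k ≠ 0), ¬ mf < k :=
      fun k hk hlt => lt_irrefl _ (lt_of_lt_of_le hlt (hmax' hk hlt.le))
    have hmf : g mf ≠ 0 := by simpa using (Finset.mem_filter.mp hmS).2
    set Q : Module.End F V := Finset.univ.noncommProd (fun i => A' i ^ ((mf i : ℕ)))
      (show Set.Pairwise _ _ from fun i _ j _ _ => (hA'A' i j).pow_pow _ _) with hQdef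
    have hQu : ∀ k : Fin n → Fin p, Q (u k)
        = ((∏ i, ((k i : ℕ)).descFactorial ((mf i : ℕ)) : ℕ) : F)
            • w (fun j => (k j : ℕ) - (mf j : ℕ)) := by
      intro k
      have hq := heisW_Q B A' hBB v hA'A' (fun i j hj => hA'Bne i j hj) hA'B1 hker
        Finset.univ (fun i => (mf i : ℕ)) (fun i => (k i : ℕ))
      simpa using hq
    have hsum : ∑ k, g k • Q (u k) = 0 := by
      have hq0 : Q (∑ k, g k • u k) = 0 := by rw [hg, map_zero]
      rw [map_sum] at hq0
      simpa [map_smul] using hq0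
    have hzero : ∀ k : Fin n → Fin p, k ≠ mf → g k • Q (u k) = 0 := by
      intro k hk
      by_cases hgk : g k = 0
      · rw [hgk, zero_smul]
      · have hkS : k ∈ Finset.univ.filter (fun k : Fin n → Fin p => g k ≠ 0) := by simp [hgk]
        have hnlt : ¬ mf < k := hmax k hkS
        have hex : ∃ i, (k i : ℕ) < (mf i : ℕ) := by
          by_contra hno
          push_neg at hno
          have hle : mf ≤ k := fun i => Fin.le_def.mpr (hno i)
          exact hnlt (lt_of_le_of_ne hle (fun h => hk h.symm))
        obtain ⟨i, hi⟩ := hex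
        rw [hQu k]
        have hpr : (∏ i, ((k i : ℕ)).descFactorial ((mf i : ℕ))) = 0 :=
          Finset.prod_eq_zero (Finset.mem_univ i) (Nat.descFactorial_eq_zero_iff_lt.mpr hi)
        rw [hpr, Nat.cast_zero, zero_smul, smul_zero]
    have hfin : g mf • Q (u mf) = 0 := by
      calc g mf • Q (u mf) = ∑ k, g k • Q (u k) :=
            (Fintype.sum_eq_single mf (fun k hk => hzero k hk)).symm
        _ = 0 := hsum
    rw [hQu mf] at hfin
    have hw0 : (fun j => (mf j : ℕ) - (mf j : ℕ)) = (fun _ : Fin n => (0 : ℕ)) := by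
      funext j; omega
    rw [hw0] at hfin
    have hwv : w (fun _ : Fin n => (0:ℕ)) = v := heisW_zero B hBB v
    rw [hwv] at hfin
    have hcoef : ((∏ i, ((mf i : ℕ)).descFactorial ((mf i : ℕ)) : ℕ) : F) ≠ 0 := by
      rw [Ne, CharP.cast_eq_zero_iff F p]
      intro hdvd
      obtain ⟨i, -, hdi⟩ := (Prime.dvd_finset_prod_iff hp.prime _).mp hdvd
      rw [Nat.descFactorial_self] at hdi
      have := (Nat.Prime.dvd_factorial hp).mp hdi
      have := (mf i).isLt
      omega
    rcases smul_eq_zero.mp hfin with h | h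
    · exact hmf h
    · rcases smul_eq_zero.mp h with h' | h'
      · exact hcoef h'
      · exact hv h'
  have hspan : ⊤ ≤ Submodule.span F (Set.range u) := le_of_eq hWtop.symm
  let bas : Module.Basis (Fin n → Fin p) F V := Module.Basis.mk hu_li hspan
  rw [Module.finrank_eq_card_basis bas]
  simp [Fintype.card_fun]
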